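/- If c = d/2 for some odd integer d ≥ 3, then there exists a nonzero finite-dimensional module over the spherical algebra A_{−c} = e H_{−c} e. -/

import Mathlib

/-!
STATEMENT 17. Let `W = {1,s}` act on `ℂ[x]` by `s x = -x`.  For `c ∈ ℂ` the Dunkl
operator is `T_c = d/dx - (c/x)(1-s)`, an endomorphism of `ℂ[x,x⁻¹]`; the type `A₁`
rational Cherednik algebra `H_c` is the subalgebra of `End_ℂ (ℂ[x,x⁻¹])` generated by
multiplication by `x`, the action of `s` and `T_c`, and its spherical subalgebra is
`A_c = e H_c e` where `e = (1+s)/2`.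

Theorem: if `c = d/2` for an odd integer `d ≥ 3`, then there exists a nonzero
finite-dimensional module over the spherical algebra `A_{-c} = e H_{-c} e`.
-/

noncomputable section
open LaurentPolynomial

/-- The Laurent polynomial ring `ℂ[x,x⁻¹]`. -/
abbrev LaurentC := LaurentPolynomial ℂ

/-- Multiplication operator by a Laurent polynomial. -/
def mulOpL (r : LaurentC) : Module.End ℂ LaurentC := LinearMap.mulLeft ℂ r

/-- Multiplication by `x`. -/
def Xop : Module.End ℂ LaurentC := mulOpL (T 1)

/-- The action of the reflection `s : x ↦ -x` on `ℂ[x,x⁻¹]`: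
`x^n ↦ (-1)^n x^n`. -/
def Sop : Module.End ℂ LaurentC :=
  (AddMonoidAlgebra.coeffLinearEquiv ℂ).symm.toLinearMap ∘ₗ
  Finsupp.lsum ℂ (fun n : ℤ => (((-1 : ℂ) ^ n)) • Finsupp.lsingle n) ∘ₗ
  (AddMonoidAlgebra.coeffLinearEquiv ℂ).toLinearMap

/-- The derivative `d/dx` on `ℂ[x,x⁻¹]`: `x^n ↦ n x^(n-1)`. -/
def Dx : Module.End ℂ LaurentC :=
  (AddMonoidAlgebra.coeffLinearEquiv ℂ).symm.toLinearMap ∘ₗ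
  Finsupp.lsum ℂ (fun n : ℤ => ((n : ℂ)) • Finsupp.lsingle (n - 1)) ∘ₗ
  (AddMonoidAlgebra.coeffLinearEquiv ℂ).toLinearMap

/-- The Dunkl operator `T_c = d/dx - (c/x)(1 - s)` of type `A₁`. -/
def DunklA1 (c : ℂ) : Module.End ℂ LaurentC :=
  Dx - c • (mulOpL (T (-1)) * (1 - Sop))

/-- The rational Cherednik algebra `H_c` of type `A₁`, realised (via the Dunkl
embedding) as the subalgebra of `End_ℂ (ℂ[x,x⁻¹])` generated by multiplication by
`x`, the action of `s`, and the Dunkl operator `T_c`. -/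
def HcA1 (c : ℂ) : Subalgebra ℂ (Module.End ℂ LaurentC) :=
  Algebra.adjoin ℂ {Xop, Sop, DunklA1 c}

/-- The trivial (symmetrising) idempotent `e = (1+s)/2`. -/
def eop : Module.End ℂ LaurentC := (2⁻¹ : ℂ) • (1 + Sop)

/-- The spherical subalgebra `A_c = e H_c e`, as a subset of `End_ℂ (ℂ[x,x⁻¹])`. -/
def sphericalA1 (c : ℂ) : Set (Module.End ℂ LaurentC) :=
  {D | ∃ P ∈ HcA1 c, D = eop * P * eop}

namespace Statement17
open LaurentPolynomial

/-- Coefficient of `Xop f`. -/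
lemma coeff_Xop (f : LaurentC) (m : ℤ) : (Xop f).coeff m = f.coeff (m - 1) := by
  show ((T 1 : LaurentC) * f).coeff m = f.coeff (m - 1)
  rw [show (T 1 : LaurentC) = AddMonoidAlgebra.single (1 : ℤ) (1 : ℂ) from rfl,
    AddMonoidAlgebra.coeff_single_mul_apply]
  rw [one_mul, neg_add_eq_sub]

/-- Coefficient of `mulOpL (T (-1)) f`. -/
lemma coeff_Tneg (f : LaurentC) (m : ℤ) : (mulOpL (T (-1)) f).coeff m = f.coeff (m + 1) := by
  show ((T (-1) : LaurentC) * f).coeff m = f.coeff (m + 1)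
  rw [show (T (-1) : LaurentC) = AddMonoidAlgebra.single (-1 : ℤ) (1 : ℂ) from rfl,
    AddMonoidAlgebra.coeff_single_mul_apply]
  rw [one_mul, neg_neg, add_comm]

/-- Coefficient of `Sop f`. -/
lemma coeff_Sop (f : LaurentC) (m : ℤ) : (Sop f).coeff m = (-1 : ℂ) ^ m * f.coeff m := by
  induction f using AddMonoidAlgebra.induction_linear with
  | zero => simp
  | add g h hg hh =>
      rw [map_add]
      rw [AddMonoidAlgebra.coeff_add, AddMonoidAlgebra.coeff_add, Finsupp.add_apply,
        Finsupp.add_apply, hg, hh]; ring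
  | single n a =>
      show ((Finsupp.lsum ℂ (fun n : ℤ => (((-1 : ℂ) ^ n)) • Finsupp.lsingle n) :
        (ℤ →₀ ℂ) →ₗ[ℂ] (ℤ →₀ ℂ)) (Finsupp.single n a)) m = _
      rw [AddMonoidAlgebra.coeff_single]; erw [Finsupp.lsum_single]
      erw [LinearMap.smul_apply, Finsupp.lsingle_apply, Finsupp.smul_apply, smul_eq_mul]
      rcases eq_or_ne n m with rfl | h
      · rfl
      · rw [Finsupp.single_apply, if_neg h, mul_zero, mul_zero]

/-- Coefficient of `Dx f`. -/
lemma coeff_Dx (f : LaurentC) (m : ℤ) : (Dx f).coeff m = ((m : ℂ) + 1) * f.coeff (m + 1) := by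
  induction f using AddMonoidAlgebra.induction_linear with
  | zero => simp
  | add g h hg hh =>
      rw [map_add]
      rw [AddMonoidAlgebra.coeff_add, AddMonoidAlgebra.coeff_add, Finsupp.add_apply,
        Finsupp.add_apply, hg, hh]; ring
  | single n a =>
      show ((Finsupp.lsum ℂ (fun n : ℤ => ((n : ℂ)) • Finsupp.lsingle (n - 1)) :
        (ℤ →₀ ℂ) →ₗ[ℂ] (ℤ →₀ ℂ)) (Finsupp.single n a)) m = _
      rw [AddMonoidAlgebra.coeff_single]; erw [Finsupp.lsum_single]
      erw [LinearMap.smul_apply, Finsupp.lsingle_apply, Finsupp.smul_apply, smul_eq_mul]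
      rcases eq_or_ne n (m + 1) with rfl | h
      · have h2 : m + 1 - 1 = m := by omega
        rw [h2, Finsupp.single_apply, Finsupp.single_apply, if_pos rfl, if_pos rfl]
        push_cast; ring
      · have h1 : n - 1 ≠ m := by omega
        rw [Finsupp.single_apply, Finsupp.single_apply, if_neg h, if_neg h1, mul_zero, mul_zero]

/-- Coefficient of the Dunkl operator with parameter `-c`. -/
lemma coeff_Dunkl (c : ℂ) (f : LaurentC) (m : ℤ) :
    (DunklA1 (-c) f).coeff m = ((m : ℂ) + 1 + c * (1 - (-1 : ℂ) ^ (m + 1))) * f.coeff (m + 1) := by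
  have h1 : DunklA1 (-c) f = Dx f + c • (mulOpL (T (-1)) ((1 - Sop) f)) := by
    rw [DunklA1, LinearMap.sub_apply, LinearMap.smul_apply, Module.End.mul_apply, neg_smul,
      sub_neg_eq_add]
  rw [h1]
  rw [AddMonoidAlgebra.coeff_add, Finsupp.add_apply, AddMonoidAlgebra.coeff_smul, Finsupp.smul_apply,
    coeff_Dx, coeff_Tneg]
  have h2 : ((1 - Sop) f).coeff (m + 1) = f.coeff (m + 1) - (-1 : ℂ) ^ (m + 1) * f.coeff (m + 1) := by
    rw [LinearMap.sub_apply, Module.End.one_apply, AddMonoidAlgebra.coeff_sub, Finsupp.sub_apply,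
      coeff_Sop]
  rw [h2, smul_eq_mul]
  ring

/-- Coefficient of `eop f`. -/
lemma coeff_eop (f : LaurentC) (m : ℤ) :
    (eop f).coeff m = (2⁻¹ : ℂ) * (f.coeff m + (-1 : ℂ) ^ m * f.coeff m) := by
  show ((2⁻¹ : ℂ) • ((1 + Sop) f)).coeff m = _
  rw [AddMonoidAlgebra.coeff_smul, Finsupp.smul_apply, LinearMap.add_apply, Module.End.one_apply,
    AddMonoidAlgebra.coeff_add, Finsupp.add_apply,
    coeff_Sop, smul_eq_mul]

lemma coeff_eop_of_even {m : ℤ} (hm : Even m) (f : LaurentC) : (eop f).coeff m = f.coeff m := by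
  rw [coeff_eop, hm.neg_one_zpow]; ring

lemma coeff_eop_of_odd {m : ℤ} (hm : Odd m) (f : LaurentC) : (eop f).coeff m = 0 := by
  rw [coeff_eop, hm.neg_one_zpow]; ring

lemma coeff_eop_eq_zero {m : ℤ} {f : LaurentC} (hf : f.coeff m = 0) : (eop f).coeff m = 0 := by
  rw [coeff_eop, hf]; ring

/-- The submodule of Laurent polynomials supported in degrees `≥ N`. -/
def Wge (N : ℤ) : Submodule ℂ LaurentC where
  carrier := {f | ∀ m : ℤ, m < N → f.coeff m = 0}
  add_mem' := by
    intro f g hf hg m hm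
    rw [AddMonoidAlgebra.coeff_add, Finsupp.add_apply, hf m hm, hg m hm, add_zero]
  zero_mem' := by intro m _; rfl
  smul_mem' := by
    intro a f hf m hm
    rw [AddMonoidAlgebra.coeff_smul, Finsupp.smul_apply, hf m hm, smul_zero]

/-- Every element of `H_{-c}` preserves `Wge N` provided `N + c(1-(-1)^N) = 0`. -/
lemma HcA1_preserves (c : ℂ) (N : ℤ) (hN : (N : ℂ) + c * (1 - (-1 : ℂ) ^ N) = 0)
    {P : Module.End ℂ LaurentC} (hP : P ∈ HcA1 (-c)) :
    ∀ f ∈ Wge N, P f ∈ Wge N := by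
  induction hP using Algebra.adjoin_induction with
  | mem x hx =>
      simp only [Set.mem_insert_iff, Set.mem_singleton_iff] at hx
      rcases hx with rfl | rfl | rfl
      · intro f hf m hm
        rw [coeff_Xop]
        exact hf _ (by omega)
      · intro f hf m hm
        rw [coeff_Sop, hf m hm, mul_zero]
      · intro f hf m hm
        rw [coeff_Dunkl]
        rcases lt_or_ge (m + 1) N with h | h
        · rw [hf _ h, mul_zero]
        · have hmN : m + 1 = N := by omega
          have hmc : (m : ℂ) + 1 = (N : ℂ) := by exact_mod_cast congrArg (Int.cast : ℤ → ℂ) hmN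
          rw [hmN, hmc, hN, zero_mul]
  | algebraMap r =>
      intro f hf m hm
      rw [Module.algebraMap_end_apply, AddMonoidAlgebra.coeff_smul, Finsupp.smul_apply, hf m hm, smul_zero]
  | add x y hx hy ihx ihy =>
      intro f hf m hm
      rw [LinearMap.add_apply, AddMonoidAlgebra.coeff_add, Finsupp.add_apply, ihx f hf m hm, ihy f hf m hm, add_zero]
  | mul x y hx hy ihx ihy =>
      intro f hf
      exact ihx _ (ihy f hf)

lemma eop_mem_Wge {N : ℤ} {f : LaurentC} (hf : f ∈ Wge N) : eop f ∈ Wge N :=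
  fun m hm => coeff_eop_eq_zero (hf m hm)

/-- The even negative exponents `-2, -4, ..., -2k`. -/
def expf (k : ℕ) (i : Fin k) : ℤ := -2 * ((i : ℤ) + 1)

lemma expf_even (k : ℕ) (i : Fin k) : Even (expf k i) :=
  ⟨-((i : ℤ) + 1), by rw [expf]; ring⟩

lemma expf_neg (k : ℕ) (i : Fin k) : expf k i < 0 := by
  have : (0:ℤ) ≤ (i:ℤ) := Int.natCast_nonneg _
  rw [expf]; omega

lemma expf_ge (k : ℕ) (i : Fin k) : -2 * (k : ℤ) ≤ expf k i := by
  have : (i:ℤ) < (k:ℤ) := by exact_mod_cast i.isLt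
  rw [expf]; omega

lemma expf_inj (k : ℕ) {i j : Fin k} (h : expf k i = expf k j) : i = j := by
  rw [expf, expf] at h
  have h2 : (i:ℤ) = (j:ℤ) := by omega
  exact Fin.ext (by exact_mod_cast h2)

/-- The embedding of `ℂ^k` into Laurent polynomials via the basis `x^{-2},...,x^{-2k}`. -/
def iotaL (k : ℕ) : (Fin k → ℂ) →ₗ[ℂ] LaurentC where
  toFun v := AddMonoidAlgebra.ofCoeff (∑ i, Finsupp.single (expf k i) (v i))
  map_add' v w := by
    rw [← AddMonoidAlgebra.ofCoeff_add]
    simp only [Pi.add_apply, Finsupp.single_add, Finset.sum_add_distrib]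
  map_smul' a v := by
    rw [RingHom.id_apply, ← AddMonoidAlgebra.ofCoeff_smul]
    simp only [Pi.smul_apply, Finset.smul_sum, smul_eq_mul]
    congr 1
    refine Finset.sum_congr rfl fun x _ => ?_
    erw [Finsupp.smul_single, smul_eq_mul]

/-- The projection reading off coefficients of `x^{-2},...,x^{-2k}`. -/
def piL (k : ℕ) : LaurentC →ₗ[ℂ] (Fin k → ℂ) :=
  LinearMap.pi (fun i => Finsupp.lapply (expf k i) ∘ₗ (AddMonoidAlgebra.coeffLinearEquiv ℂ).toLinearMap)

lemma piL_apply (k : ℕ) (f : LaurentC) (i : Fin k) : piL k f i = f.coeff (expf k i) := rfl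

lemma coeff_iotaL (k : ℕ) (v : Fin k → ℂ) (m : ℤ) :
    (iotaL k v).coeff m = ∑ i, (Finsupp.single (expf k i) (v i) : ℤ →₀ ℂ) m := by
  show (∑ i, (Finsupp.single (expf k i) (v i) : ℤ →₀ ℂ)) m = _
  exact Finsupp.finset_sum_apply _ _ _

lemma coeff_iotaL_expf (k : ℕ) (v : Fin k → ℂ) (i : Fin k) :
    (iotaL k v).coeff (expf k i) = v i := by
  rw [coeff_iotaL, Finset.sum_eq_single i]
  · rw [Finsupp.single_apply, if_pos rfl]
  · intro j _ hj
    rw [Finsupp.single_apply, if_neg (fun h => hj (expf_inj k h))]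
  · intro h; exact absurd (Finset.mem_univ i) h

lemma coeff_iotaL_of_ne (k : ℕ) (v : Fin k → ℂ) (m : ℤ) (h : ∀ i, expf k i ≠ m) :
    (iotaL k v).coeff m = 0 := by
  rw [coeff_iotaL]
  exact Finset.sum_eq_zero fun i _ => by rw [Finsupp.single_apply, if_neg (h i)]

lemma iotaL_mem_Wge {d : ℤ} (k : ℕ) (hdk : d = 2 * (k : ℤ) + 1) (v : Fin k → ℂ) :
    iotaL k v ∈ Wge (-d) := by
  intro m hm
  refine coeff_iotaL_of_ne k v m fun i => ?_
  have := expf_ge k i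
  omega

lemma iotaL_odd_coeff (k : ℕ) (v : Fin k → ℂ) {m : ℤ} (hm : Odd m) : (iotaL k v).coeff m = 0 := by
  refine coeff_iotaL_of_ne k v m fun i h => ?_
  have he : Even m := h ▸ expf_even k i
  exact (Int.not_odd_iff_even.mpr he) hm

/-- The key combinatorial fact: an even Laurent polynomial supported in degrees `≥ -d`
agrees with `ιπ` of itself in all negative degrees. -/
lemma sub_iotaL_piL_mem {d : ℤ} (k : ℕ) (hdk : d = 2 * (k : ℤ) + 1) {g : LaurentC}
    (h1 : g ∈ Wge (-d)) (h2 : ∀ m : ℤ, Odd m → g.coeff m = 0) :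
    g - iotaL k (piL k g) ∈ Wge 0 := by
  intro m hm
  rw [AddMonoidAlgebra.coeff_sub, Finsupp.sub_apply]
  by_cases hex : ∃ i : Fin k, expf k i = m
  · obtain ⟨i, rfl⟩ := hex
    rw [coeff_iotaL_expf, piL_apply, sub_self]
  · push_neg at hex
    rw [coeff_iotaL_of_ne k _ m hex, sub_zero]
    rcases Int.even_or_odd m with he | ho
    · rcases lt_or_ge m (-d) with h | h
      · exact h1 m h
      · obtain ⟨t, ht⟩ := he
        exfalso
        have hlt : (-t - 1).toNat < k := by omega
        refine hex ⟨(-t - 1).toNat, hlt⟩ ?_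
        show -2 * ((((-t - 1).toNat : ℕ) : ℤ) + 1) = m
        omega
    · exact h2 m ho

/-- The representation map `D ↦ π ∘ D ∘ ι`. -/
def rhoL (k : ℕ) : Module.End ℂ LaurentC →ₗ[ℂ] Module.End ℂ (Fin k → ℂ) where
  toFun D := piL k ∘ₗ D ∘ₗ iotaL k
  map_add' D D' := by
    refine LinearMap.ext fun v => funext fun i => ?_
    rfl
  map_smul' a D := by
    refine LinearMap.ext fun v => funext fun i => ?_
    rfl

lemma rhoL_apply (k : ℕ) (D : Module.End ℂ LaurentC) (v : Fin k → ℂ) :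
    rhoL k D v = piL k (D (iotaL k v)) := rfl

lemma piL_eq_zero_of_mem_Wge (k : ℕ) {f : LaurentC} (hf : f ∈ Wge 0) : piL k f = 0 := by
  funext i
  rw [piL_apply]
  exact hf _ (expf_neg k i)

end Statement17


/-- If `c = d/2` with `d ≥ 3` an odd integer, then there is a
nonzero finite-dimensional module over the spherical algebra `A_{-c} = e H_{-c} e`:
i.e. there are `n > 0` and a `ℂ`-linear representation `ρ` of `A_{-c}` on `ℂⁿ`
which is multiplicative on `A_{-c}` and sends the identity element `e` of `A_{-c}`
to the identity. -/
theorem exists_nonzero_finite_dim_module_of_spherical_neg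
    (d : ℤ) (hodd : Odd d) (hd : 3 ≤ d) (c : ℂ) (hc : c = (d : ℂ) / 2) :
    ∃ n : ℕ, 0 < n ∧
      ∃ ρ : Module.End ℂ LaurentC →ₗ[ℂ] Module.End ℂ (Fin n → ℂ),
        ρ eop = 1 ∧
        (∀ D ∈ sphericalA1 (-c), ∀ D' ∈ sphericalA1 (-c), ρ (D * D') = ρ D * ρ D') := by
  have hodd' := hodd
  obtain ⟨j, hj⟩ := hodd
  have hj1 : 1 ≤ j := by omega
  refine ⟨j.toNat, by omega, ?_⟩
  set k : ℕ := j.toNat with hkdef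
  have hk : (k : ℤ) = j := Int.toNat_of_nonneg (by omega)
  have hdk : d = 2 * (k : ℤ) + 1 := by omega
  refine ⟨Statement17.rhoL k, ?_, ?_⟩
  · refine LinearMap.ext fun v => funext fun i => ?_
    rw [Statement17.rhoL_apply, Statement17.piL_apply,
      Statement17.coeff_eop_of_even (Statement17.expf_even k i),
      Statement17.coeff_iotaL_expf]
    rfl
  · have hW0 : ∀ Q ∈ HcA1 (-c), ∀ f ∈ Statement17.Wge 0, Q f ∈ Statement17.Wge 0 := by
      intro Q hQ
      refine Statement17.HcA1_preserves c 0 ?_ hQ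
      norm_num
    have hWd : ∀ Q ∈ HcA1 (-c), ∀ f ∈ Statement17.Wge (-d), Q f ∈ Statement17.Wge (-d) := by
      intro Q hQ
      refine Statement17.HcA1_preserves c (-d) ?_ hQ
      rw [(hodd'.neg).neg_one_zpow]
      push_cast
      rw [hc]; ring
    intro D hD D' hD'
    obtain ⟨P, hP, rfl⟩ := hD
    obtain ⟨P', hP', rfl⟩ := hD'
    refine LinearMap.ext fun v => ?_
    set E := eop * P * eop with hE
    set E' := eop * P' * eop with hE'
    have happE' : ∀ f : LaurentC, E' f = eop (P' (eop f)) := fun f => rfl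
    have happE : ∀ f : LaurentC, E f = eop (P (eop f)) := fun f => rfl
    set g := E' (Statement17.iotaL k v) with hg
    have hgW : g ∈ Statement17.Wge (-d) := by
      rw [hg, happE']
      exact Statement17.eop_mem_Wge
        (hWd P' hP' _ (Statement17.eop_mem_Wge (Statement17.iotaL_mem_Wge k hdk v)))
    have hgodd : ∀ m : ℤ, Odd m → g.coeff m = 0 := by
      intro m hm
      rw [hg, happE']
      exact Statement17.coeff_eop_of_odd hm _
    have hr : g - Statement17.iotaL k (Statement17.piL k g) ∈ Statement17.Wge 0 :=
      Statement17.sub_iotaL_piL_mem k hdk hgW hgodd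
    have hEr : E (g - Statement17.iotaL k (Statement17.piL k g)) ∈ Statement17.Wge 0 := by
      rw [happE]
      exact Statement17.eop_mem_Wge (hW0 P hP _ (Statement17.eop_mem_Wge hr))
    have hpi0 : Statement17.piL k (E (g - Statement17.iotaL k (Statement17.piL k g))) = 0 :=
      Statement17.piL_eq_zero_of_mem_Wge k hEr
    have hdecomp : E g = E (Statement17.iotaL k (Statement17.piL k g)) +
        E (g - Statement17.iotaL k (Statement17.piL k g)) := by
      rw [← map_add]
      congr 1
      abel
    have hrho : Statement17.rhoL k E' v = Statement17.piL k g := rfl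
    show Statement17.rhoL k (E * E') v = (Statement17.rhoL k E * Statement17.rhoL k E') v
    rw [Module.End.mul_apply, hrho, Statement17.rhoL_apply, Statement17.rhoL_apply,
      Module.End.mul_apply, ← hg, hdecomp, map_add, hpi0, add_zero]


end
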